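/- Let θ₁ ∈ ℝ, let n be a positive integer, and let θ ∈ ℝ be such that θ − θ₁ is not an integer multiple of 2π. Then the n-th partial derivative with respect to θ (at fixed ρ) of u_δ(ρ, θ, θ₁) = 1/(2π) − (1/π)·ρ(ρ − cos(θ − θ₁)) / ((ρ² + 1) − 2ρ cos(θ − θ₁)) tends to 0 as ρ → 1⁻. -/

import Mathlib

open Real Filter

noncomputable def Ff (θ₁ : ℝ) (p : ℝ × ℝ) : ℝ :=
  1 / (2 * Real.pi) -
    (1 / Real.pi) * (p.1 * (p.1 - Real.cos (p.2 - θ₁))) /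
      ((p.1 ^ 2 + 1) - 2 * p.1 * Real.cos (p.2 - θ₁))

def Sδ (θ₁ : ℝ) : Set (ℝ × ℝ) :=
  {p | (p.1 ^ 2 + 1) - 2 * p.1 * Real.cos (p.2 - θ₁) ≠ 0}

lemma isOpen_Sδ (θ₁ : ℝ) : IsOpen (Sδ θ₁) := by
  have hc : Continuous fun p : ℝ × ℝ =>
      (p.1 ^ 2 + 1) - 2 * p.1 * Real.cos (p.2 - θ₁) := by fun_prop
  exact isOpen_compl_singleton.preimage hc

lemma contDiff_cosp (θ₁ : ℝ) : ContDiff ℝ ⊤ (fun p : ℝ × ℝ => Real.cos (p.2 - θ₁)) :=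
  Real.contDiff_cos.comp (contDiff_snd.sub contDiff_const)

lemma contDiffOn_Ff (θ₁ : ℝ) : ContDiffOn ℝ ⊤ (Ff θ₁) (Sδ θ₁) := by
  apply ContDiffOn.sub contDiffOn_const
  apply ContDiffOn.div
  · exact (contDiff_const.mul (contDiff_fst.mul (contDiff_fst.sub (contDiff_cosp θ₁)))).contDiffOn
  · exact (((contDiff_fst.pow 2).add contDiff_const).sub
      ((contDiff_const.mul contDiff_fst).mul (contDiff_cosp θ₁))).contDiffOn
  · intro p hp; exact hp

lemma key (θ₁ : ℝ) (n : ℕ) :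
    ∃ G : ℝ × ℝ → ℝ, ContDiffOn ℝ ⊤ G (Sδ θ₁) ∧
      ∀ p ∈ Sδ θ₁, iteratedDeriv n (fun t => Ff θ₁ (p.1, t)) p.2 = G p := by
  induction n with
  | zero =>
    exact ⟨Ff θ₁, contDiffOn_Ff θ₁, fun p _ => by simp [iteratedDeriv_zero]⟩
  | succ n ih =>
    obtain ⟨G, hG, hEq⟩ := ih
    refine ⟨fun p => fderiv ℝ G p (0, 1), ?_, ?_⟩
    · exact (hG.fderiv_of_isOpen (isOpen_Sδ θ₁) le_top).clm_apply contDiffOn_const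
    · intro p hp
      rw [iteratedDeriv_succ]
      have hmem : ∀ᶠ t in nhds p.2, (p.1, t) ∈ Sδ θ₁ := by
        have : ContinuousAt (fun t : ℝ => (p.1, t)) p.2 := by fun_prop
        exact this ((isOpen_Sδ θ₁).mem_nhds hp)
      have heq : (fun t => iteratedDeriv n (fun s => Ff θ₁ (p.1, s)) t)
          =ᶠ[nhds p.2] (fun t => G (p.1, t)) := by
        filter_upwards [hmem] with t ht
        exact hEq (p.1, t) ht
      rw [heq.deriv_eq]
      -- deriv of t ↦ G (p.1, t) equals fderiv G p (0,1)
      have hdiff : DifferentiableAt ℝ G p :=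
        (hG.differentiableOn (by simp)).differentiableAt ((isOpen_Sδ θ₁).mem_nhds hp)
      have hL : HasFDerivAt (fun t : ℝ => (p.1, t))
          (((0 : ℝ →L[ℝ] ℝ)).prod (ContinuousLinearMap.id ℝ ℝ)) p.2 :=
        (hasFDerivAt_const p.1 p.2).prodMk (hasFDerivAt_id p.2)
      have hcomp := (hdiff.hasFDerivAt.comp p.2 hL)
      have : (fun t : ℝ => (p.1, t)) = fun t : ℝ => ((p.1 : ℝ), t) := rfl
      have hres : HasDerivAt (fun t => G (p.1, t)) (fderiv ℝ G p (0, 1)) p.2 := by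
        have := hcomp.hasDerivAt
        exact this
      exact hres.deriv

lemma iterZeroFun (m : ℕ) : iteratedDeriv m (fun _ : ℝ => (0 : ℝ)) = fun _ => 0 := by
  induction m with
  | zero => simp [iteratedDeriv_zero]
  | succ m ih =>
    rw [iteratedDeriv_succ',
      show deriv (fun _ : ℝ => (0 : ℝ)) = fun _ => 0 from funext fun x => deriv_const x 0]
    exact ih

lemma mem_Sδ_one {θ₁ θ : ℝ} (h : ∀ k : ℤ, θ - θ₁ ≠ 2 * Real.pi * k) :
    ((1 : ℝ), θ) ∈ Sδ θ₁ := by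
  simp only [Sδ, Set.mem_setOf_eq]
  intro hD
  have hc : Real.cos (θ - θ₁) = 1 := by norm_num at hD; linarith
  obtain ⟨k, hk⟩ := (Real.cos_eq_one_iff _).1 hc
  exact h k (by rw [← hk]; ring)

lemma Ff_one_eq_zero {θ₁ t : ℝ} (ht : ((1 : ℝ), t) ∈ Sδ θ₁) : Ff θ₁ (1, t) = 0 := by
  have hD : (1 : ℝ) ^ 2 + 1 - 2 * 1 * Real.cos (t - θ₁) ≠ 0 := ht
  have hpi := Real.pi_ne_zero
  simp only [Ff]
  have hc1 : (1:ℝ) - Real.cos (t - θ₁) ≠ 0 := by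
    intro hc; apply hD; rw [show Real.cos (t - θ₁) = 1 by linarith]; ring
  rw [show (1:ℝ) ^ 2 + 1 - 2 * 1 * Real.cos (t - θ₁)
      = 2 * (1 - Real.cos (t - θ₁)) by ring]
  rw [show (1 / Real.pi) * (1 * (1 - Real.cos (t - θ₁))) / (2 * (1 - Real.cos (t - θ₁)))
      = 1 / (2 * Real.pi) by field_simp]
  ring

/-- away from the singular point (`θ − θ₁` not an integer
multiple of `2π`), the n-th partial derivative of `u_δ(ρ, θ, θ₁)` with respect
to `θ` at fixed `ρ` tends to `0` as `ρ → 1⁻`. -/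
theorem stmt_11 (θ₁ : ℝ) (n : ℕ) (hn : 0 < n) (θ : ℝ)
    (h : ∀ k : ℤ, θ - θ₁ ≠ 2 * Real.pi * k) :
    Filter.Tendsto (fun ρ : ℝ =>
        iteratedDeriv n (fun t : ℝ =>
          1 / (2 * Real.pi) -
            (1 / Real.pi) * (ρ * (ρ - Real.cos (t - θ₁))) /
              ((ρ ^ 2 + 1) - 2 * ρ * Real.cos (t - θ₁))) θ)
      (nhdsWithin 1 (Set.Iio 1)) (nhds 0) := by
  obtain ⟨G, hG, hEq⟩ := key θ₁ n
  have hmem1 : ((1 : ℝ), θ) ∈ Sδ θ₁ := mem_Sδ_one h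
  have hSopen := isOpen_Sδ θ₁
  -- G (1, θ) = 0
  have hG0 : G (1, θ) = 0 := by
    rw [← hEq (1, θ) hmem1]
    have hmem : ∀ᶠ t in nhds θ, ((1 : ℝ), t) ∈ Sδ θ₁ := by
      have hc : ContinuousAt (fun t : ℝ => ((1 : ℝ), t)) θ := by fun_prop
      exact hc (hSopen.mem_nhds hmem1)
    have hev : (fun t => Ff θ₁ (1, t)) =ᶠ[nhds θ] (fun _ => (0 : ℝ)) := by
      filter_upwards [hmem] with t ht
      exact Ff_one_eq_zero ht
    rw [hev.iteratedDeriv_eq n, iterZeroFun n]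
  -- eventually in the filter, the function equals G (ρ, θ)
  have hmemρ : ∀ᶠ ρ in nhdsWithin (1 : ℝ) (Set.Iio 1), ((ρ : ℝ), θ) ∈ Sδ θ₁ := by
    apply nhdsWithin_le_nhds
    have hc : ContinuousAt (fun ρ : ℝ => ((ρ : ℝ), θ)) 1 := by fun_prop
    exact hc (hSopen.mem_nhds hmem1)
  have htend : Filter.Tendsto (fun ρ : ℝ => G (ρ, θ)) (nhdsWithin 1 (Set.Iio 1)) (nhds 0) := by
    have hGc : ContinuousAt G (1, θ) :=
      (hG.continuousOn.continuousAt (hSopen.mem_nhds hmem1))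
    have hmap : ContinuousAt (fun ρ : ℝ => ((ρ : ℝ), θ)) 1 := by fun_prop
    have hc : ContinuousAt (fun ρ : ℝ => G (ρ, θ)) 1 :=
      ContinuousAt.comp (f := fun ρ : ℝ => ((ρ : ℝ), θ)) (g := G) hGc hmap
    rw [← hG0]
    exact hc.continuousWithinAt.tendsto
  apply htend.congr'
  filter_upwards [hmemρ] with ρ hρ
  exact (hEq (ρ, θ) hρ).symm
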